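/- If a : ℕ → ℕ is a sequence of positive integers with gcd(a m, a n) = a (gcd m n) for all m, n ≥ 1, and c is its characteristic sequence (a n = ∏_{d ∣ n} c d), then for any coprime positive integers m, n, and any d ∣ m with d > 1 and e ∣ n with e > 1, we have gcd(c d, c e) = 1. -/

import Mathlib

theorem char_seq_coprime (a c : ℕ → ℕ)
    (hapos : ∀ n, 1 ≤ n → 0 < a n) (hcpos : ∀ n, 1 ≤ n → 0 < c n)
    (hgcd : ∀ m n, 1 ≤ m → 1 ≤ n → Nat.gcd (a m) (a n) = a (Nat.gcd m n))
    (ha : ∀ n, 1 ≤ n → a n = ∏ d ∈ n.divisors, c d) :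
    ∀ m n d e, 1 ≤ m → 1 ≤ n → Nat.Coprime m n →
      d ∣ m → 1 < d → e ∣ n → 1 < e → Nat.Coprime (c d) (c e) := by
  intro m n d e hm hn hmn hdm hd hen he
  have hd1 : 1 ≤ d := hd.le
  have he1 : 1 ≤ e := he.le
  have hde : Nat.gcd d e = 1 :=
    Nat.Coprime.coprime_dvd_right hen (Nat.Coprime.coprime_dvd_left hdm hmn)
  have h1d : (1 : ℕ) ∈ d.divisors := Nat.one_mem_divisors.2 (by omega)
  have h1e : (1 : ℕ) ∈ e.divisors := Nat.one_mem_divisors.2 (by omega)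
  set P := ∏ k ∈ d.divisors.erase 1, c k with hP
  set Q := ∏ k ∈ e.divisors.erase 1, c k with hQ
  have had : a d = c 1 * P := by
    rw [ha d hd1, ← Finset.mul_prod_erase _ _ h1d]
  have hae : a e = c 1 * Q := by
    rw [ha e he1, ← Finset.mul_prod_erase _ _ h1e]
  have ha1 : a 1 = c 1 := by
    rw [ha 1 le_rfl, Nat.divisors_one, Finset.prod_singleton]
  have key : c 1 * Nat.gcd P Q = c 1 * 1 := by
    rw [mul_one, ← Nat.gcd_mul_left, ← had, ← hae, hgcd d e hd1 he1, hde, ha1]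
  have hPQ : Nat.gcd P Q = 1 := Nat.eq_of_mul_eq_mul_left (hcpos 1 le_rfl) key
  have hdP : c d ∣ P :=
    Finset.dvd_prod_of_mem _ (Finset.mem_erase.2 ⟨by omega, Nat.mem_divisors_self d (by omega)⟩)
  have heQ : c e ∣ Q :=
    Finset.dvd_prod_of_mem _ (Finset.mem_erase.2 ⟨by omega, Nat.mem_divisors_self e (by omega)⟩)
  exact Nat.Coprime.coprime_dvd_right heQ (Nat.Coprime.coprime_dvd_left hdP hPQ)
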